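/- Let Λ be a finitely-aligned k-graph and m ≤ n in ℕ^k. The homomorphisms φ_m: C₀(∂Λ) → 𝓛(X_m) satisfy ker φ_m ⊆ ker φ_n, and consequently the ideal I_n := ⋂_{0 < p ≤ n} ker φ_p equals ⋂_{i : n_i > 0} ker φ_{e_i}. -/

import Mathlib

open scoped ENNReal ComplexConjugate ZeroAtInfty
open Classical

/-- A `k`-graph: a countable category `Λ` with degree functor `d : Λ → ℕ^k`
satisfying the unique factorisation property.  Vertices are the objects,
`P` is the set of morphisms (paths), `comp` is composition (meaningful when
`s a = r b`). -/
structure KGraph (k : ℕ) where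
  V : Type
  P : Type
  r : P → V
  s : P → V
  d : P → Fin k → ℕ
  comp : P → P → P
  r_comp : ∀ a b, s a = r b → r (comp a b) = r a
  s_comp : ∀ a b, s a = r b → s (comp a b) = s b
  d_comp : ∀ a b, s a = r b → d (comp a b) = d a + d b
  comp_assoc : ∀ a b c, s a = r b → s b = r c →
    comp (comp a b) c = comp a (comp b c)
  vtx : V → P
  r_vtx : ∀ v, r (vtx v) = v
  s_vtx : ∀ v, s (vtx v) = v
  d_vtx : ∀ v, d (vtx v) = 0
  comp_vtx : ∀ a, comp a (vtx (s a)) = a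
  vtx_comp : ∀ a, comp (vtx (r a)) a = a
  /-- unique factorisation property -/
  factor : ∀ (lam : P) (m n : Fin k → ℕ), d lam = m + n →
    ∃! mn : P × P, s mn.1 = r mn.2 ∧ d mn.1 = m ∧ d mn.2 = n ∧
      lam = comp mn.1 mn.2
  countableP : Countable P

namespace KGraph

variable {k : ℕ} (G : KGraph k)

/-- `Λ^min(λ,μ) = {(α,β) : λα = μβ, d(λα) = d(λ) ∨ d(μ)}`. -/
def Lmin (lam mu : G.P) : Set (G.P × G.P) :=
  {p | G.s lam = G.r p.1 ∧ G.s mu = G.r p.2 ∧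
    G.comp lam p.1 = G.comp mu p.2 ∧
    G.d lam + G.d p.1 = G.d lam ⊔ G.d mu}

def FinitelyAligned : Prop := ∀ lam mu : G.P, (G.Lmin lam mu).Finite

/-- `Ext(λ;E) = {α : (α,β) ∈ Λ^min(λ,ν) for some ν ∈ E, β}`. -/
def Ext (lam : G.P) (E : Set G.P) : Set G.P :=
  {a | ∃ ν ∈ E, ∃ b, (a, b) ∈ G.Lmin lam ν}

/-- `E ⊆ vΛ` is exhaustive if every `μ ∈ vΛ` has a minimal common
extension with some element of `E`. -/
def Exhaustive (v : G.V) (E : Set G.P) : Prop :=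
  (∀ lam ∈ E, G.r lam = v) ∧
    ∀ mu, G.r mu = v → ∃ lam ∈ E, (G.Lmin lam mu).Nonempty

/-- `λ` extends `μ`: `λ = μλ'` for some `λ'`. -/
def Extends (lam mu : G.P) : Prop :=
  ∃ lam', G.s mu = G.r lam' ∧ lam = G.comp mu lam'

/-- A graph morphism `x : Ω_{k,m} → Λ`: `deg = m ∈ (ℕ∪{∞})^k` and
`seg p q = x(p,q)` for `p ≤ q ≤ m`. -/
structure GM (G : KGraph k) where
  deg : Fin k → ℕ∞
  seg : (Fin k → ℕ) → (Fin k → ℕ) → G.P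
  d_seg : ∀ p q : Fin k → ℕ, p ≤ q → (∀ i, (q i : ℕ∞) ≤ deg i) →
    G.d (seg p q) = q - p
  comp_seg : ∀ p q r : Fin k → ℕ, p ≤ q → q ≤ r →
    (∀ i, (r i : ℕ∞) ≤ deg i) → seg p r = G.comp (seg p q) (seg q r)
  s_seg : ∀ p q r : Fin k → ℕ, p ≤ q → q ≤ r →
    (∀ i, (r i : ℕ∞) ≤ deg i) → G.s (seg p q) = G.r (seg q r)

/-- The boundary condition on a graph morphism. -/
def IsBoundary (x : GM G) : Prop :=
  ∀ n : Fin k → ℕ, (∀ i, (n i : ℕ∞) ≤ x.deg i) →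
    ∀ E : Set G.P, E.Finite → G.Exhaustive (G.r (x.seg n n)) E →
      ∃ lam ∈ E, (∀ i, ((n i + G.d lam i : ℕ) : ℕ∞) ≤ x.deg i) ∧
        x.seg n (n + G.d lam) = lam

/-- The boundary-path space `∂Λ`. -/
def BPath (G : KGraph k) := {x : GM G // G.IsBoundary x}

/-- `D_λ = {x ∈ ∂Λ : x(0,d(λ)) = λ}`. -/
def DSet (lam : G.P) : Set (BPath G) :=
  {x | (∀ i, (G.d lam i : ℕ∞) ≤ x.1.deg i) ∧ x.1.seg 0 (G.d lam) = lam}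

/-- `D_{λF} = ⋃_{ν ∈ F} D_{λν}`. -/
def DFSet (lam : G.P) (F : Set G.P) : Set (BPath G) :=
  ⋃ ν ∈ F, G.DSet (G.comp lam ν)

/-- The basic open sets `D_λ \ D_{λF}` of the topology on `∂Λ`. -/
def basicSets : Set (Set (BPath G)) :=
  {U | ∃ (lam : G.P) (F : Set G.P), F.Finite ∧
    (∀ ν ∈ F, G.r ν = G.s lam) ∧ U = G.DSet lam \ G.DFSet lam F}

instance : TopologicalSpace (BPath G) :=
  TopologicalSpace.generateFrom (G.basicSets)

/-- `∂Λ^{≥n}`. -/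
def geSet (n : Fin k → ℕ) : Set (BPath G) :=
  {x | ∀ i, (n i : ℕ∞) ≤ x.1.deg i}

/-- `ShiftEq n x y` says `d(x) ≥ n` and `σ_n(x) = y`. -/
def ShiftEq (n : Fin k → ℕ) (x y : BPath G) : Prop :=
  x ∈ G.geSet n ∧ (∀ i, y.1.deg i = x.1.deg i - (n i : ℕ∞)) ∧
    ∀ p q : Fin k → ℕ, p ≤ q → (∀ i, (q i : ℕ∞) ≤ y.1.deg i) →
      y.1.seg p q = x.1.seg (p + n) (q + n)

/-- `σ : ∂Λ^{≥n} → ∂Λ` is the shift map `σ_n`. -/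
def IsShift (n : Fin k → ℕ) (σ : G.geSet n → BPath G) : Prop :=
  ∀ x, G.ShiftEq n x.1 (σ x)

/-- Condition `K(i)` for the pair `(λ,F)`. -/
def ConditionK (i : Fin k) (lam : G.P) (F : Set G.P) : Prop :=
  ∀ mu, G.r mu = G.s lam → 1 ≤ G.d mu i →
    ∃ ν ∈ F, G.DSet mu ⊆ G.DSet ν

/-- Extension by zero of a function on `∂Λ^{≥n}` to `∂Λ`. -/
noncomputable def extFun {n : Fin k → ℕ} (f : G.geSet n → ℂ) :
    BPath G → ℂ :=
  fun x => if h : x ∈ G.geSet n then f ⟨x, h⟩ else 0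

/-- The `C₀(∂Λ)`-valued inner product `⟨f,g⟩_n(x) = Σ_{σ_n(y)=x} conj(f y) g y`. -/
noncomputable def innerP (n : Fin k → ℕ) (f g : BPath G → ℂ) :
    BPath G → ℂ :=
  fun x => ∑' y : {y : BPath G // G.ShiftEq n y x}, conj (f y) * g y

/-- Characteristic function `χ_{D_λ \ D_{λF}}`. -/
noncomputable def chiD (lam : G.P) (F : Set G.P) : BPath G → ℂ :=
  fun x => if x ∈ G.DSet lam \ G.DFSet lam F then 1 else 0

end KGraph

/-- The kernels `ker φ_p = {a ∈ C₀(∂Λ) : a|_{∂Λ^{≥p}} = 0}` are nested: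
`m ≤ n → ker φ_m ⊆ ker φ_n`; consequently
`I_n = ⋂_{0<p≤n} ker φ_p = ⋂_{i : n_i>0} ker φ_{e_i}`. -/
theorem stmt10 {k : ℕ} (G : KGraph k) (hFA : G.FinitelyAligned)
    (n : Fin k → ℕ) :
    (∀ m m' : Fin k → ℕ, m ≤ m' →
      {a : C₀(KGraph.BPath G, ℂ) | ∀ x ∈ G.geSet m, a x = 0} ⊆
        {a : C₀(KGraph.BPath G, ℂ) | ∀ x ∈ G.geSet m', a x = 0}) ∧
    ((⋂ p ∈ {p : Fin k → ℕ | 0 < p ∧ p ≤ n},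
        {a : C₀(KGraph.BPath G, ℂ) | ∀ x ∈ G.geSet p, a x = 0}) =
      ⋂ i ∈ {i : Fin k | 0 < n i},
        {a : C₀(KGraph.BPath G, ℂ) |
          ∀ x ∈ G.geSet (Pi.single i 1), a x = 0}) := by
  have hmono : ∀ m m' : Fin k → ℕ, m ≤ m' → G.geSet m' ⊆ G.geSet m := by
    intro m m' h x hx i
    exact le_trans (by exact_mod_cast Nat.cast_le.mpr (h i)) (hx i)
  have hker : ∀ m m' : Fin k → ℕ, m ≤ m' →
      {a : C₀(KGraph.BPath G, ℂ) | ∀ x ∈ G.geSet m, a x = 0} ⊆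
        {a : C₀(KGraph.BPath G, ℂ) | ∀ x ∈ G.geSet m', a x = 0} := by
    intro m m' h a ha x hx
    exact ha x (hmono m m' h hx)
  refine ⟨hker, ?_⟩
  apply Set.Subset.antisymm
  · intro a ha
    simp only [Set.mem_iInter] at ha ⊢
    intro i hi
    refine ha (Pi.single i 1) ⟨?_, ?_⟩
    · refine lt_of_le_of_ne (by positivity) ?_
      intro h
      have := congrFun h i
      simp at this
    · intro j
      by_cases hij : j = i
      · subst hij; simp only [Pi.single_eq_same]; exact hi
      · simp [Pi.single_apply, hij]
  · intro a ha
    simp only [Set.mem_iInter] at ha ⊢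
    rintro p ⟨hp0, hpn⟩
    obtain ⟨i, hi⟩ : ∃ i, 0 < p i := by
      by_contra h
      push_neg at h
      exact absurd (le_antisymm (fun i => h i) (le_of_lt hp0)) (ne_of_gt hp0)
    have hsingle : Pi.single i 1 ≤ p := by
      intro j
      by_cases hij : j = i
      · subst hij; simp only [Pi.single_eq_same]; exact hi
      · simp [Pi.single_apply, hij]
    exact hker _ _ hsingle (ha i (lt_of_lt_of_le hi (hpn i)))
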